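/- For z > 0 and n ≥ 1, the variance of the length L of a random self-avoiding walk on K_n equals (1/z)(1 - (E_z^{(n)}(L) + 1)/χ_z^{(n)}). -/

import Mathlib

open Finset

/-- `c_N^{(n)} = (n-1)!/(n-1-N)!`, the number of `N`-step self-avoiding walks on `K_n`. -/
noncomputable def sawCount (n N : ℕ) : ℝ :=
  (Nat.factorial (n - 1) : ℝ) / (Nat.factorial (n - 1 - N) : ℝ)

lemma sawCount_pos (n N : ℕ) : 0 < sawCount n N := by
  unfold sawCount
  positivity

lemma sawCount_succ (n M : ℕ) (h : M + 1 ≤ n - 1) :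
    sawCount n (M + 1) = ((n : ℝ) - 1 - M) * sawCount n M := by
  unfold sawCount
  have h1 : n - 1 - M = (n - 1 - (M + 1)) + 1 := by omega
  have hcast : ((n : ℝ) - 1 - M) = ((n - 1 - M : ℕ) : ℝ) := by
    rw [Nat.cast_sub (by omega), Nat.cast_sub (by omega)]
    push_cast
    ring
  have hb : ((Nat.factorial (n - 1 - (M + 1)) : ℝ)) ≠ 0 := by
    exact_mod_cast (Nat.factorial_pos _).ne'
  have hk : ((n - 1 - (M + 1) + 1 : ℕ) : ℝ) ≠ 0 := by
    exact_mod_cast (Nat.succ_ne_zero (n - 1 - (M + 1)))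
  have hne : ((n - 1 : ℕ) : ℝ) - ((M : ℝ) + 1) + 1 ≠ 0 := by
    have hlt : (M : ℝ) < ((n - 1 : ℕ) : ℝ) := by exact_mod_cast (by omega : M < n - 1)
    intro hc; linarith
  rw [hcast, h1, Nat.factorial_succ, Nat.cast_mul]
  field_simp [hne]

lemma shift_sum (n : ℕ) (hn : 1 ≤ n) (z : ℝ) (f : ℕ → ℝ) :
    ∑ N ∈ Finset.range n, f N * sawCount n N * z ^ N
      = f 0 + z * ∑ M ∈ Finset.range n,
          f (M + 1) * (((n : ℝ) - 1 - M) * sawCount n M) * z ^ M := by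
  obtain ⟨m, rfl⟩ : ∃ m, n = m + 1 := ⟨n - 1, by omega⟩
  rw [Finset.sum_range_succ' (fun N => f N * sawCount (m + 1) N * z ^ N) m]
  rw [Finset.sum_range_succ]
  have hlast : (((m + 1 : ℕ) : ℝ) - 1 - m) = 0 := by push_cast; ring
  rw [hlast]
  have hm : (Nat.factorial m : ℝ) ≠ 0 := by exact_mod_cast (Nat.factorial_pos m).ne'
  have h0 : sawCount (m + 1) 0 = 1 := by
    simp [sawCount, hm]
  have hterm : ∀ M ∈ Finset.range m,
      f (M + 1) * sawCount (m + 1) (M + 1) * z ^ (M + 1)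
        = z * (f (M + 1) * ((((m + 1 : ℕ) : ℝ) - 1 - M) * sawCount (m + 1) M) * z ^ M) := by
    intro M hM
    rw [Finset.mem_range] at hM
    rw [sawCount_succ (m + 1) M (by omega)]
    push_cast
    ring
  rw [Finset.sum_congr rfl hterm]
  rw [← Finset.mul_sum]
  simp [h0]
  ring

/-- The susceptibility `χ_z^{(n)} = ∑_{N=0}^{n-1} c_N^{(n)} z^N`. -/
noncomputable def chi (n : ℕ) (z : ℝ) : ℝ :=
  ∑ N ∈ Finset.range n, sawCount n N * z ^ N

/-- The expected length `E_z^{(n)}(L)`. -/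
noncomputable def meanL (n : ℕ) (z : ℝ) : ℝ :=
  (∑ N ∈ Finset.range n, (N : ℝ) * sawCount n N * z ^ N) / chi n z

/-- The second moment `E_z^{(n)}(L²)`. -/
noncomputable def secondMomentL (n : ℕ) (z : ℝ) : ℝ :=
  (∑ N ∈ Finset.range n, (N : ℝ) ^ 2 * sawCount n N * z ^ N) / chi n z

/-- The variance `Var_z^{(n)}(L) = E(L²) − (E L)²`. -/
noncomputable def varL (n : ℕ) (z : ℝ) : ℝ :=
  secondMomentL n z - (meanL n z) ^ 2

lemma rec1 (n : ℕ) (hn : 1 ≤ n) (z : ℝ) :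
    chi n z = 1 + z * (((n : ℝ) - 1) * chi n z
      - ∑ N ∈ Finset.range n, (N : ℝ) * sawCount n N * z ^ N) := by
  have h := shift_sum n hn z (fun _ => (1 : ℝ))
  simp only [one_mul] at h
  have key : ∑ M ∈ Finset.range n, (((n : ℝ) - 1 - M) * sawCount n M) * z ^ M
      = ((n : ℝ) - 1) * chi n z
        - ∑ N ∈ Finset.range n, (N : ℝ) * sawCount n N * z ^ N := by
    rw [chi, Finset.mul_sum, ← Finset.sum_sub_distrib]
    exact Finset.sum_congr rfl (fun M _ => by ring)
  rw [key] at h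
  rw [chi] at h ⊢
  exact h

lemma rec2 (n : ℕ) (hn : 1 ≤ n) (z : ℝ) :
    (∑ N ∈ Finset.range n, (N : ℝ) * sawCount n N * z ^ N)
      = z * (((n : ℝ) - 1) * ((∑ N ∈ Finset.range n, (N : ℝ) * sawCount n N * z ^ N) + chi n z)
        - (∑ N ∈ Finset.range n, (N : ℝ) ^ 2 * sawCount n N * z ^ N)
        - (∑ N ∈ Finset.range n, (N : ℝ) * sawCount n N * z ^ N)) := by
  have h := shift_sum n hn z (fun N => (N : ℝ))
  simp only [Nat.cast_zero, Nat.cast_add, Nat.cast_one, zero_add] at h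
  have key : ∀ M ∈ Finset.range n,
      ((M : ℝ) + 1) * (((n : ℝ) - 1 - M) * sawCount n M) * z ^ M
        = ((n : ℝ) - 1) * ((M : ℝ) * sawCount n M * z ^ M + sawCount n M * z ^ M)
          - (M : ℝ) ^ 2 * sawCount n M * z ^ M - (M : ℝ) * sawCount n M * z ^ M := by
    intro M _; ring
  have key2 : ∑ M ∈ Finset.range n, ((M : ℝ) + 1) * (((n : ℝ) - 1 - M) * sawCount n M) * z ^ M
      = ((n : ℝ) - 1) * ((∑ N ∈ Finset.range n, (N : ℝ) * sawCount n N * z ^ N) + chi n z)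
        - (∑ N ∈ Finset.range n, (N : ℝ) ^ 2 * sawCount n N * z ^ N)
        - (∑ N ∈ Finset.range n, (N : ℝ) * sawCount n N * z ^ N) := by
    rw [Finset.sum_congr rfl key, Finset.sum_sub_distrib, Finset.sum_sub_distrib,
      ← Finset.mul_sum, Finset.sum_add_distrib, chi]
  rw [key2] at h
  exact h

theorem varL_eq (n : ℕ) (hn : 1 ≤ n) (z : ℝ) (hz : 0 < z) :
    varL n z = (1 / z) * (1 - (meanL n z + 1) / chi n z) := by
  have hCpos : 0 < chi n z := by
    rw [chi]
    apply Finset.sum_pos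
    · intro i _
      have := sawCount_pos n i
      positivity
    · exact ⟨0, Finset.mem_range.mpr hn⟩
  have hC : chi n z ≠ 0 := ne_of_gt hCpos
  have hz' : z ≠ 0 := ne_of_gt hz
  have e1 := rec1 n hn z
  have e2 := rec2 n hn z
  rw [varL, secondMomentL, meanL]
  set C := chi n z
  set S1 := ∑ N ∈ Finset.range n, (N : ℝ) * sawCount n N * z ^ N
  set S2 := ∑ N ∈ Finset.range n, (N : ℝ) ^ 2 * sawCount n N * z ^ N
  field_simp
  refine mul_left_cancel₀ hC ?_
  linear_combination (C ^ 2) * e2 - (C * (S1 + C)) * e1
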